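/- For the Frattini quotient: if G is a finite group with Φ(G) its Frattini subgroup, and a prime p divides |G : F(G)|, then p divides |G/Φ(G) : F(G/Φ(G))|. -/

import Mathlib

/-- The Fitting subgroup of a group: the join of all nilpotent normal subgroups. -/
def fittingSubgroup (G : Type*) [Group G] : Subgroup G :=
  sSup {H : Subgroup G | H.Normal ∧ Group.IsNilpotent H}

open Subgroup

/-- A characteristic subgroup of a normal subgroup is normal. -/
lemma charInNormal_aux {G : Type*} [Group G] (K : Subgroup G) [K.Normal]
    (L : Subgroup K) [hL : L.Characteristic] : (L.map K.subtype).Normal := by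
  constructor
  rintro _ ⟨x, hx, rfl⟩ g
  refine ⟨MulAut.conjNormal g x, ?_, by simp⟩
  have h := hL.fixed (MulAut.conjNormal g)
  rw [← h] at hx
  exact hx

/-- If `K` is a normal subgroup of a finite group `G` containing the Frattini subgroup,
and `K/Φ(G)` is nilpotent, then `K` is nilpotent. -/
lemma nilpotent_of_quotient_frattini_aux {G : Type*} [Group G] [Finite G]
    (K : Subgroup G) [hKn : K.Normal] (hΦ : frattini G ≤ K)
    (hnil : Group.IsNilpotent (K.map (QuotientGroup.mk' (frattini G)))) :
    Group.IsNilpotent K := by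
  have q := (isNilpotent_of_finite_tfae (G := K)).out 0 3
  rw [q]; clear q
  intro p p_prime P
  set π := QuotientGroup.mk' (frattini G) with hπdef
  have hπ : Function.Surjective π := QuotientGroup.mk'_surjective _
  set Kb := K.map π with hKbdef
  haveI : Kb.Normal := hKn.map π hπ
  -- The image of `P` is a Sylow subgroup of `Kb`.
  let Pb : Sylow p Kb := P.mapSurjective (π.subgroupMap_surjective K)
  -- Since `Kb` is nilpotent, `Pb` is normal, hence characteristic in `Kb`.
  have hPbnormal : (Pb : Subgroup Kb).Normal := by
    have q2 := (isNilpotent_of_finite_tfae (G := Kb)).out 0 3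
    exact (q2.mp hnil) p p_prime Pb
  haveI : (Pb : Subgroup Kb).Characteristic := Sylow.characteristic_of_normal Pb hPbnormal
  -- hence its image `R` in `G/Φ` is normal in `G/Φ`.
  set R := (Pb : Subgroup Kb).map Kb.subtype with hRdef
  have hR : R.Normal := charInNormal_aux Kb (Pb : Subgroup Kb)
  set Q := (P : Subgroup K).map K.subtype with hQdef
  have hmapQ : Q.map π = R := by
    have hcomp : Kb.subtype.comp (π.subgroupMap K) = π.comp K.subtype := by
      ext x; rfl
    have hRr : R = ((P : Subgroup K).map (π.subgroupMap K)).map Kb.subtype := rfl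
    rw [hRr, Subgroup.map_map, Subgroup.map_map, hcomp]
  set N := Q ⊔ frattini G with hNdef
  have hNcomap : N = R.comap π := by
    rw [← hmapQ, comap_map_eq, QuotientGroup.ker_mk']
  haveI hNnormal : N.Normal := hNcomap ▸ hR.comap π
  have hQN : Q ≤ N := le_sup_left
  have hNK : N ≤ K := sup_le (map_subtype_le _) hΦ
  -- `Q` is a Sylow `p`-subgroup of `N`.
  have hpQ : IsPGroup p Q := P.isPGroup'.map K.subtype
  have hpQN : IsPGroup p (Q.subgroupOf N) :=
    hpQ.of_equiv (subgroupOfEquivOfLe hQN).symm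
  have hidx : ¬ p ∣ (Q.subgroupOf N).index := by
    intro hdvd
    have h1 : Q.relIndex N ∣ Q.relIndex K :=
      ⟨N.relIndex K, (relIndex_mul_relIndex Q N K hQN hNK).symm⟩
    have h2 : Q.relIndex K = (P : Subgroup K).index := by
      rw [hQdef, Subgroup.relIndex, Subgroup.subgroupOf,
        comap_map_eq_self_of_injective K.subtype_injective]
    have h3 : p ∣ (P : Subgroup K).index := by
      rw [← h2]
      exact hdvd.trans h1
    exact P.not_dvd_index h3
  let S : Sylow p N := hpQN.toSylow hidx
  have hS : (S : Subgroup N) = Q.subgroupOf N := rfl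
  have fa := Sylow.normalizer_sup_eq_top S
  rw [hS, subgroupOf_map_subtype, inf_of_le_left hQN] at fa
  -- rearrange: normalizer Q ⊔ frattini G = ⊤
  have fa2 : normalizer (Q : Set G) ⊔ frattini G = ⊤ := by
    rw [← fa, hNdef, ← sup_assoc, sup_of_le_left Subgroup.le_normalizer]
  have hQtop : normalizer (Q : Set G) = ⊤ := frattini_nongenerating fa2
  have hQnormal : Q.Normal := normalizer_eq_top_iff.mp hQtop
  exact hQnormal.of_map_subtype

/-- If `p` divides `|G : F(G)|` for a finite group `G`, then `p` divides
`|G/Φ(G) : F(G/Φ(G))|`, where `Φ` is the Frattini subgroup. -/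
theorem stmt_19 (G : Type*) [Group G] [Finite G] (p : ℕ) (hp : p.Prime)
    (hdvd : p ∣ (fittingSubgroup G).index) :
    p ∣ (fittingSubgroup (G ⧸ frattini G)).index := by
  set Φ := frattini G with hΦdef
  set π := QuotientGroup.mk' Φ with hπdef
  have hπ : Function.Surjective π := QuotientGroup.mk'_surjective Φ
  have hΦF : Φ ≤ fittingSubgroup G := le_sSup ⟨inferInstance, frattini_nilpotent⟩
  have hle : (fittingSubgroup (G ⧸ Φ)).comap π ≤ fittingSubgroup G := by
    have h1 : fittingSubgroup (G ⧸ Φ) ≤ (fittingSubgroup G).map π := by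
      apply sSup_le
      rintro Hb ⟨hN, hnil⟩
      haveI := hN
      set K := Hb.comap π with hKdef
      haveI : K.Normal := hN.comap π
      have hmc : K.map π = Hb := Subgroup.map_comap_eq_self_of_surjective hπ Hb
      have hΦK : Φ ≤ K := by
        intro x hx
        rw [hKdef, Subgroup.mem_comap]
        have hx1 : π x = 1 := by rwa [← MonoidHom.mem_ker, hπdef, QuotientGroup.ker_mk']
        rw [hx1]
        exact Hb.one_mem
      have hKnil : Group.IsNilpotent K :=
        nilpotent_of_quotient_frattini_aux K hΦK (by rw [hmc]; exact hnil)
      calc Hb = K.map π := hmc.symm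
        _ ≤ (fittingSubgroup G).map π :=
          Subgroup.map_mono (le_sSup ⟨‹K.Normal›, hKnil⟩)
    calc (fittingSubgroup (G ⧸ Φ)).comap π
        ≤ ((fittingSubgroup G).map π).comap π := Subgroup.comap_mono h1
      _ = fittingSubgroup G ⊔ Φ := by rw [Subgroup.comap_map_eq, hπdef, QuotientGroup.ker_mk']
      _ = fittingSubgroup G := sup_of_le_left hΦF
  have hdvd2 := Subgroup.index_dvd_of_le hle
  rw [Subgroup.index_comap_of_surjective _ hπ] at hdvd2
  exact hdvd.trans hdvd2
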